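/- The frequency cross-correlation features of ESTAG are E(3)-invariant: let T, N be positive integers, x : Fin T → Fin N → ℝ³ be node positions, w : Fin N → Fin T → ℝ be fixed per-node spectral weights, and define f_i(k) = Σ_{t=0}^{T-1} exp(-i' · 2πkt/T) • (x_i(t) - x̄(t)) ∈ ℂ³ and A_{ij}(k) = w_i(k) · w_j(k) · |⟨f_i(k), f_j(k)⟩|, where ⟨·,·⟩ is the Hermitian inner product on ℂ³. Then for every real orthogonal 3×3 matrix O and every b ∈ ℝ³, the quantity A_{ij}(k) computed from the transformed positions t ↦ (i ↦ O · x_i(t) + b) equals A_{ij}(k) computed from x, for all i, j, k. -/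

import Mathlib

open scoped BigOperators

/-- Componentwise coercion of a real 3-vector into a complex 3-vector. -/
noncomputable def complexify (v : EuclideanSpace ℝ (Fin 3)) : EuclideanSpace ℂ (Fin 3) :=
  WithLp.toLp 2 (fun a => (v a : ℂ))

/-- Mean position of the `N` nodes at frame `t`. -/
noncomputable def meanPos {T N : ℕ} (x : Fin T → Fin N → EuclideanSpace ℝ (Fin 3))
    (t : Fin T) : EuclideanSpace ℝ (Fin 3) :=
  (N : ℝ)⁻¹ • ∑ j : Fin N, x t j

/-- Equivariant Discrete Fourier Transform:
`f_i(k) = ∑_{t=0}^{T-1} exp(-i' · 2πkt/T) • (x_i(t) - x̄(t)) ∈ ℂ³`. -/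
noncomputable def edft {T N : ℕ} (x : Fin T → Fin N → EuclideanSpace ℝ (Fin 3))
    (i : Fin N) (k : Fin T) : EuclideanSpace ℂ (Fin 3) :=
  ∑ t : Fin T,
    Complex.exp (-Complex.I * (2 * (Real.pi : ℂ) * (k.val : ℂ) * (t.val : ℂ) / (T : ℂ))) •
      complexify (x t i - meanPos x t)

/-- The E(3) action `x ↦ O·x + b` on 3-vectors. -/
noncomputable def e3Act (O : Matrix (Fin 3) (Fin 3) ℝ) (b : EuclideanSpace ℝ (Fin 3))
    (v : EuclideanSpace ℝ (Fin 3)) : EuclideanSpace ℝ (Fin 3) :=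
  (show EuclideanSpace ℝ (Fin 3) from WithLp.toLp 2 (O.mulVec v)) + b

/-- Frequency cross-correlation `A_{ij}(k) = w_i(k) w_j(k) |⟨f_i(k), f_j(k)⟩|`. -/
noncomputable def crossCorr {T N : ℕ} (w : Fin N → Fin T → ℝ)
    (x : Fin T → Fin N → EuclideanSpace ℝ (Fin 3)) (i j : Fin N) (k : Fin T) : ℝ :=
  w i k * w j k * ‖(inner ℂ (edft x i k) (edft x j k) : ℂ)‖

/-- Frequency amplitude `c_i(k) = w_i(k) ‖f_i(k)‖²`. -/
noncomputable def amplitude {T N : ℕ} (w : Fin N → Fin T → ℝ)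
    (x : Fin T → Fin N → EuclideanSpace ℝ (Fin 3)) (i : Fin N) (k : Fin T) : ℝ :=
  w i k * ‖edft x i k‖ ^ 2

/-- The frequency cross-correlation features of ESTAG are E(3)-invariant:
computing `A_{ij}(k)` from the transformed positions `t ↦ (i ↦ O·x_i(t) + b)` gives the
same value as computing it from `x`, for all `i`, `j`, `k`. -/
lemma euclid_sum_apply {𝕜 : Type*} [RCLike 𝕜] {ι : Type*} (s : Finset ι)
    (f : ι → EuclideanSpace 𝕜 (Fin 3)) (a : Fin 3) :
    (∑ t ∈ s, f t) a = ∑ t ∈ s, f t a :=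
  map_sum (EuclideanSpace.projₗ (𝕜 := 𝕜) a) f s

theorem crossCorr_E3_invariant (T N : ℕ) (hT : 0 < T) (hN : 0 < N)
    (x : Fin T → Fin N → EuclideanSpace ℝ (Fin 3)) (w : Fin N → Fin T → ℝ)
    (O : Matrix (Fin 3) (Fin 3) ℝ) (hO : O ∈ Matrix.orthogonalGroup (Fin 3) ℝ)
    (b : EuclideanSpace ℝ (Fin 3)) :
    ∀ (i j : Fin N) (k : Fin T),
      crossCorr w (fun t l => e3Act O b (x t l)) i j k = crossCorr w x i j k := by
  intro i j k
  have hNne : (N : ℝ) ≠ 0 := Nat.cast_ne_zero.mpr hN.ne'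
  -- the difference to the mean is rotated by O
  have hsub : ∀ (t : Fin T) (l : Fin N) (a : Fin 3),
      (e3Act O b (x t l) - meanPos (fun t l => e3Act O b (x t l)) t) a
        = ∑ c : Fin 3, O a c * (x t l - meanPos x t) c := by
    intro t l a
    simp only [PiLp.sub_apply, e3Act, meanPos, PiLp.add_apply, PiLp.smul_apply,
      euclid_sum_apply, smul_eq_mul, Matrix.mulVec, dotProduct, mul_sub,
      Finset.mul_sum, Finset.sum_add_distrib, Finset.sum_sub_distrib]
    have hb : (N : ℝ)⁻¹ * (∑ _l : Fin N, b a) = b a := by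
      simp [Finset.sum_const, hNne]
    rw [mul_add, hb, add_sub_add_right_eq_sub, Finset.sum_comm (γ := Fin N),
      Finset.mul_sum, ← Finset.sum_sub_distrib]
    rw [Finset.sum_sub_distrib]
    refine congrArg₂ (· - ·) rfl ?_
    exact Finset.sum_congr rfl fun c _ => by
      rw [Finset.mul_sum]
      exact Finset.sum_congr rfl fun m _ => by ring
  -- hence the EDFT is rotated by O (complexified)
  have hf : ∀ (l : Fin N) (a : Fin 3),
      edft (fun t m => e3Act O b (x t m)) l k a
        = ∑ c : Fin 3, (O a c : ℂ) * edft x l k c := by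
    intro l a
    simp only [edft, euclid_sum_apply, PiLp.smul_apply, complexify, smul_eq_mul]
    have step : ∀ t : Fin T,
        Complex.exp (-Complex.I * (2 * (Real.pi : ℂ) * (k.val : ℂ) * (t.val : ℂ) / (T : ℂ)))
            * ((e3Act O b (x t l) - meanPos (fun t m => e3Act O b (x t m)) t) a : ℂ)
          = ∑ c : Fin 3, (O a c : ℂ) *
              (Complex.exp (-Complex.I * (2 * (Real.pi : ℂ) * (k.val : ℂ) * (t.val : ℂ) / (T : ℂ)))
                * ((x t l - meanPos x t) c : ℂ)) := by
      intro t
      rw [hsub t l a]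
      push_cast
      rw [Finset.mul_sum]
      exact Finset.sum_congr rfl fun c _ => by ring
    rw [Finset.sum_congr rfl fun t _ => step t, Finset.sum_comm]
    exact Finset.sum_congr rfl fun c _ => by rw [Finset.mul_sum]
  -- the rows of O are orthonormal
  have hOc : ∀ (bb c : Fin 3), (∑ a : Fin 3, (O a bb : ℂ) * (O a c : ℂ))
      = if bb = c then 1 else 0 := by
    intro bb c
    have h1 : (star O * O) bb c = (1 : Matrix (Fin 3) (Fin 3) ℝ) bb c := by
      rw [hO.1]
    simp only [Matrix.mul_apply, Matrix.star_apply, star_trivial, Matrix.one_apply] at h1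
    have h2 := congrArg (Complex.ofReal) h1
    push_cast at h2
    rw [h2]
    split <;> simp
  -- the Hermitian inner product is preserved
  have hinner : (inner ℂ (edft (fun t m => e3Act O b (x t m)) i k)
        (edft (fun t m => e3Act O b (x t m)) j k) : ℂ)
      = inner ℂ (edft x i k) (edft x j k) := by
    simp only [PiLp.inner_apply, RCLike.inner_apply, mul_comm _ ((starRingEnd ℂ) _)]
    have key : ∀ a : Fin 3,
        (starRingEnd ℂ) (edft (fun t m => e3Act O b (x t m)) i k a)
            * edft (fun t m => e3Act O b (x t m)) j k a
          = ∑ bb : Fin 3, ∑ c : Fin 3,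
              (starRingEnd ℂ) ((O a bb : ℂ) * edft x i k bb)
                * ((O a c : ℂ) * edft x j k c) := by
      intro a
      rw [hf i a, hf j a, map_sum, Finset.sum_mul_sum]
    rw [Finset.sum_congr rfl fun a _ => key a, Finset.sum_comm,
      Finset.sum_congr rfl fun bb _ => Finset.sum_comm]
    have inner_sum : ∀ bb c : Fin 3,
        (∑ a : Fin 3, (starRingEnd ℂ) ((O a bb : ℂ) * edft x i k bb)
          * ((O a c : ℂ) * edft x j k c))
        = (if bb = c then 1 else 0)
            * ((starRingEnd ℂ) (edft x i k bb) * edft x j k c) := by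
      intro bb c
      rw [← hOc bb c, Finset.sum_mul]
      congr 1
      funext a
      rw [map_mul, Complex.conj_ofReal]
      ring
    rw [Finset.sum_congr rfl fun bb _ =>
      Finset.sum_congr rfl fun c _ => inner_sum bb c]
    simp [Finset.sum_ite_eq]
  unfold crossCorr
  rw [hinner]
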